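/- (Harnack inequality.) Let G be a finite connected weighted graph, n ∈ (1,∞), κ ∈ ℝ, and suppose f : V → ℂ is a nonzero eigenfunction of −Δ with eigenvalue λ > 0 which satisfies CD(n,κ). Then at each vertex x ∈ V: |∇f|²(x) ≤ ((8 − 2/n)·λ − 4κ) · max_{z ∈ V} |f(z)|². -/

import Mathlib

open Finset ComplexConjugate
open scoped Classical

namespace Mag

variable {V : Type*}

/-- The degree of a vertex: total weight of incident edges. -/
noncomputable def deg [Fintype V] (p : V → V → ℝ) (x : V) : ℝ := ∑ y, p x y

/-- Adjacency: positive edge weight. -/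
def Adj (p : V → V → ℝ) (x y : V) : Prop := 0 < p x y

/-- Axioms of a weighted graph: symmetric nonnegative weights, no loops,
positive degrees. -/
structure IsWeightedGraph [Fintype V] (p : V → V → ℝ) : Prop where
  symm : ∀ x y, p x y = p y x
  nonneg : ∀ x y, 0 ≤ p x y
  loopless : ∀ x, p x x = 0
  deg_pos : ∀ x, 0 < deg p x

/-- Connectivity: any two vertices are joined by a path of successively
adjacent vertices. -/
def Connected (p : V → V → ℝ) : Prop :=
  ∀ x y : V, ∃ L : List V,
    List.Chain (Adj p) x L ∧ (x :: L).getLast (List.cons_ne_nil x L) = y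

/-- The graph distance from `x` to `y` is at most `n`. -/
def distLE (p : V → V → ℝ) (x y : V) (n : ℕ) : Prop :=
  ∃ L : List V, L.length ≤ n ∧ List.Chain (Adj p) x L ∧
    (x :: L).getLast (List.cons_ne_nil x L) = y

/-- `D` is the diameter: every pair of vertices is at distance at most `D`,
and some pair is at distance at least `D`. -/
def IsDiameter (p : V → V → ℝ) (D : ℕ) : Prop :=
  (∀ x y, distLE p x y D) ∧ ∃ x y, ∀ n, distLE p x y n → D ≤ n

/-- The (normalized) graph Laplace operator on complex-valued functions. -/
noncomputable def lap [Fintype V] (p : V → V → ℝ) (f : V → ℂ) (x : V) : ℂ :=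
  (deg p x : ℂ)⁻¹ * ∑ y, (p x y : ℂ) * (f y - f x)

/-- The graph Laplace operator acting on real-valued functions. -/
noncomputable def lapR [Fintype V] (p : V → V → ℝ) (u : V → ℝ) (x : V) : ℝ :=
  (deg p x)⁻¹ * ∑ y, p x y * (u y - u x)

/-- The energy `|∇f|²(x)` of a function at a vertex. -/
noncomputable def energy [Fintype V] (p : V → V → ℝ) (f : V → ℂ) (x : V) : ℝ :=
  (deg p x)⁻¹ * ∑ y, p x y * ‖f y - f x‖ ^ 2

/-- The first curvature operator `Γ`. -/
noncomputable def gamma [Fintype V] (p : V → V → ℝ) (f g : V → ℂ) (x : V) : ℂ :=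
  (1 / 2) * (lap p (fun v => f v * conj (g v)) x - f x * conj (lap p g x)
    - lap p f x * conj (g x))

/-- The iterated (Ricci) curvature operator `Γ₂`. -/
noncomputable def gamma2 [Fintype V] (p : V → V → ℝ) (f g : V → ℂ) (x : V) : ℂ :=
  (1 / 2) * (lap p (gamma p f g) x - gamma p f (lap p g) x - gamma p (lap p f) g x)

/-- `f` satisfies the curvature-dimension inequality `CD(n,κ)`:
`Γ₂(f,f)(x) ≥ (1/n)|Δf(x)|² + κ·Γ(f,f)(x)` at every vertex. -/
def SatCD [Fintype V] (p : V → V → ℝ) (n κ : ℝ) (f : V → ℂ) : Prop :=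
  ∀ x : V, (1 / n) * ‖lap p f x‖ ^ 2 + κ * (gamma p f f x).re ≤ (gamma2 p f f x).re

/-- The magnetic Laplace operator. -/
noncomputable def magLap [Fintype V] (p : V → V → ℝ) (σ : V → V → ℂ)
    (f : V → ℂ) (x : V) : ℂ :=
  (deg p x : ℂ)⁻¹ * ∑ y, (p x y : ℂ) * (σ x y * f y - f x)

/-- The magnetic energy `|∇^σ f|²(x)`. -/
noncomputable def magEnergy [Fintype V] (p : V → V → ℝ) (σ : V → V → ℂ)
    (f : V → ℂ) (x : V) : ℝ :=
  (deg p x)⁻¹ * ∑ y, p x y * ‖σ x y * f y - f x‖ ^ 2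

/-- The first magnetic curvature operator `Γ^σ`. -/
noncomputable def magGamma [Fintype V] (p : V → V → ℝ) (σ : V → V → ℂ)
    (f g : V → ℂ) (x : V) : ℂ :=
  (1 / 2) * (magLap p σ (fun v => f v * conj (g v)) x - f x * conj (magLap p σ g x)
    - magLap p σ f x * conj (g x))

/-- The magnetic Ricci curvature operator `Γ₂^σ`. -/
noncomputable def magGamma2 [Fintype V] (p : V → V → ℝ) (σ : V → V → ℂ)
    (f g : V → ℂ) (x : V) : ℂ :=
  (1 / 2) * (lap p (magGamma p σ f g) x - magGamma p σ f (magLap p σ g) x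
    - magGamma p σ (magLap p σ f) g x)

/-- `f` satisfies the magnetic curvature-dimension inequality `CD^σ(n,κ)`. -/
def SatCDSigma [Fintype V] (p : V → V → ℝ) (σ : V → V → ℂ) (n κ : ℝ)
    (f : V → ℂ) : Prop :=
  ∀ x : V, (1 / n) * ‖magLap p σ f x‖ ^ 2 + κ * (magGamma p σ f f x).re
    ≤ (magGamma2 p σ f f x).re

/-- A signature with values in the group `S¹_ℓ` of `ℓ`-th roots of unity:
`σ_{xy}^ℓ = 1` and `σ_{yx} = σ_{xy}⁻¹` on oriented edges. -/
structure IsSignature (p : V → V → ℝ) (σ : V → V → ℂ) (ℓ : ℕ) : Prop where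
  mem : ∀ x y, Adj p x y → σ x y ^ ℓ = 1
  inv : ∀ x y, Adj p x y → σ x y * σ y x = 1

/-- The signature is entire: its values (on oriented edges) generate all of
`S¹_ℓ`, i.e. every `ℓ`-th root of unity is a product of signature values. -/
def Entire (p : V → V → ℝ) (σ : V → V → ℂ) (ℓ : ℕ) : Prop :=
  ∀ z : ℂ, z ^ ℓ = 1 →
    ∃ L : List (V × V), (∀ e ∈ L, Adj p e.1 e.2) ∧ (L.map fun e => σ e.1 e.2).prod = z

/-- The product of the signature values along the consecutive edges of a
list of vertices. -/
noncomputable def sigProd (σ : V → V → ℂ) (L : List V) : ℂ :=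
  ((L.zip L.tail).map fun e => σ e.1 e.2).prod

/-- A directed cycle: a closed walk along adjacent vertices. -/
def IsCycle (p : V → V → ℝ) (L : List V) : Prop :=
  2 ≤ L.length ∧ L.Chain' (Adj p) ∧ L.head? = L.getLast?

/-- A magnetic graph is balanced if the signature product along every directed
cycle equals `1`. -/
def Balanced (p : V → V → ℝ) (σ : V → V → ℂ) : Prop :=
  ∀ L : List V, IsCycle p L → sigProd σ L = 1

/-- A directed cycle whose signature product generates `S¹_ℓ`. -/
def IsGenCycle (p : V → V → ℝ) (σ : V → V → ℂ) (ℓ : ℕ) (L : List V) : Prop :=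
  IsCycle p L ∧ ∀ z : ℂ, z ^ ℓ = 1 → ∃ m : ℕ, sigProd σ L ^ m = z

/-- `g` is the magnetic girth: the length of a shortest directed cycle whose
signature product generates `S¹_ℓ`.  (A list of `g+1` vertices, with equal
endpoints, traverses `g` edges.) -/
def IsMagGirth (p : V → V → ℝ) (σ : V → V → ℂ) (ℓ : ℕ) (g : ℕ) : Prop :=
  (∃ L, IsGenCycle p σ ℓ L ∧ L.length = g + 1) ∧
  ∀ L, IsGenCycle p σ ℓ L → g + 1 ≤ L.length

/-- The `ℓ`-th roots of unity in `ℂ` form a finite type. -/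
noncomputable instance rootsFintype (ℓ : ℕ) [NeZero ℓ] :
    Fintype {z : ℂ // z ^ ℓ = 1} := by
  apply Fintype.ofFinset ((Polynomial.nthRoots ℓ (1 : ℂ)).toFinset)
  intro z
  rw [Multiset.mem_toFinset, Polynomial.mem_nthRoots (Nat.pos_of_ne_zero (NeZero.ne ℓ))]
  exact Iff.rfl

/-- The weight function of the lift (covering) graph `Ĝ` on `V × S¹_ℓ`. -/
noncomputable def liftP (p : V → V → ℝ) (σ : V → V → ℂ) (ℓ : ℕ) :
    V × {z : ℂ // z ^ ℓ = 1} → V × {z : ℂ // z ^ ℓ = 1} → ℝ :=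
  fun a b =>
    if Adj p a.1 b.1 ∧ (b.2 : ℂ) = (a.2 : ℂ) * σ a.1 b.1 then p a.1 b.1 else 0

/-- The lift embedding `f̂(x,ξ) = ξ·f(x)`. -/
noncomputable def liftEmb (ℓ : ℕ) (f : V → ℂ) : V × {z : ℂ // z ^ ℓ = 1} → ℂ :=
  fun a => (a.2 : ℂ) * f a.1

/-- A simple graph: all edge weights are `0` or `1`. -/
def Simple (p : V → V → ℝ) : Prop := ∀ x y, p x y = 0 ∨ p x y = 1

/-- `d` is the maximum degree of the graph. -/
def IsMaxDegree [Fintype V] (p : V → V → ℝ) (d : ℝ) : Prop :=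
  (∀ x, deg p x ≤ d) ∧ ∃ x, deg p x = d

/-- `l` is the least eigenvalue of `-Δ^σ`. -/
def IsLeastEigenvalue [Fintype V] (p : V → V → ℝ) (σ : V → V → ℂ) (l : ℝ) : Prop :=
  (∃ f : V → ℂ, f ≠ 0 ∧ ∀ x, -magLap p σ f x = (l : ℂ) * f x) ∧
  ∀ (μ : ℝ) (f : V → ℂ), f ≠ 0 → (∀ x, -magLap p σ f x = (μ : ℂ) * f x) → l ≤ μ

/-- The set of frustration values of a vertex subset `V₁`: sums
`∑_{edges {x,y} ⊆ V₁} p(x,y)|τ(x) − σ_{xy}τ(y)|` over switching functions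
`τ : V₁ → S¹_ℓ`.  (Each undirected edge is counted once, via the factor `1/2`.) -/
def frustrationSet [Fintype V] (p : V → V → ℝ) (σ : V → V → ℂ) (ℓ : ℕ)
    (V₁ : Finset V) : Set ℝ :=
  { r | ∃ τ : V → ℂ, (∀ x ∈ V₁, τ x ^ ℓ = 1) ∧
      r = (1 / 2) * ∑ x ∈ V₁, ∑ y ∈ V₁, p x y * ‖τ x - σ x y * τ y‖ }

/-- The set of Cheeger ratios `(ι^σ(V₁) + |E(V₁,V₁ᶜ)|)/vol(V₁)` over nonempty
vertex subsets `V₁`, where `ι^σ(V₁)` is the frustration index of `V₁`. -/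
def cheegerSet [Fintype V] (p : V → V → ℝ) (σ : V → V → ℂ) (ℓ : ℕ) : Set ℝ :=
  { r | ∃ V₁ : Finset V, V₁.Nonempty ∧ ∃ ι : ℝ, IsLeast (frustrationSet p σ ℓ V₁) ι ∧
      r = (ι + ∑ x ∈ V₁, ∑ y ∈ V₁ᶜ, p x y) / ∑ x ∈ V₁, deg p x }

/-- `h` is the magnetic Cheeger number `h₁^σ`. -/
def IsCheeger [Fintype V] (p : V → V → ℝ) (σ : V → V → ℂ) (ℓ : ℕ) (h : ℝ) : Prop :=
  IsLeast (cheegerSet p σ ℓ) h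

lemma norm_sq_cast (z : ℂ) : ((‖z‖ : ℝ) : ℂ) ^ 2 = z * conj z := by
  rw [Complex.mul_conj]
  norm_cast
  rw [Complex.sq_norm]

lemma gamma_self [Fintype V] (p : V → V → ℝ) (f : V → ℂ) (x : V) :
    gamma p f f x = ((energy p f x / 2 : ℝ) : ℂ) := by
  unfold gamma lap energy
  rw [map_mul, map_sum]
  push_cast
  rw [Finset.mul_sum, Finset.mul_sum, Finset.mul_sum, Finset.mul_sum, Finset.sum_mul,
    ← Finset.sum_sub_distrib, ← Finset.sum_sub_distrib, Finset.mul_sum, Finset.mul_sum,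
    Finset.sum_div]
  apply Finset.sum_congr rfl
  intro y _
  simp only [map_mul, map_sub, map_inv₀, Complex.conj_ofReal]
  have hz := norm_sq_cast (f y - f x)
  rw [map_sub] at hz
  linear_combination -((deg p x : ℂ))⁻¹ * (p x y : ℂ) / 2 * hz

lemma lap_ofReal [Fintype V] (p : V → V → ℝ) (w : V → ℝ) (x : V) :
    lap p (fun v => ((w v : ℝ) : ℂ)) x = ((lapR p w x : ℝ) : ℂ) := by
  unfold lap lapR
  push_cast
  ring

lemma lap_const_mul [Fintype V] (p : V → V → ℝ) (f : V → ℂ) (c : ℂ) (x : V) :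
    lap p (fun v => c * f v) x = c * lap p f x := by
  simp only [lap, Finset.mul_sum]
  exact Finset.sum_congr rfl fun y _ => by ring

lemma lapR_linear [Fintype V] (p : V → V → ℝ) (h k : V → ℝ) (a b : ℝ) (x : V) :
    lapR p (fun v => a * h v + b * k v) x = a * lapR p h x + b * lapR p k x := by
  simp only [lapR, Finset.mul_sum]
  rw [← Finset.sum_add_distrib]
  exact Finset.sum_congr rfl fun y _ => by ring

lemma lapR_nonpos [Fintype V] (p : V → V → ℝ) (hG : IsWeightedGraph p) (h : V → ℝ)
    (x₀ : V) (hmax : ∀ y, h y ≤ h x₀) : lapR p h x₀ ≤ 0 := by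
  unfold lapR
  have h1 : (0:ℝ) ≤ (deg p x₀)⁻¹ := inv_nonneg.2 (hG.deg_pos x₀).le
  have h2 : (∑ y, p x₀ y * (h y - h x₀)) ≤ 0 :=
    Finset.sum_nonpos fun y _ => mul_nonpos_of_nonneg_of_nonpos (hG.nonneg _ _)
      (by linarith [hmax y])
  have := mul_nonneg h1 (neg_nonneg.2 h2)
  linarith

lemma energy_nonneg [Fintype V] (p : V → V → ℝ) (hG : IsWeightedGraph p) (f : V → ℂ)
    (x : V) : 0 ≤ energy p f x :=
  mul_nonneg (inv_nonneg.2 (hG.deg_pos x).le)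
    (Finset.sum_nonneg fun y _ => mul_nonneg (hG.nonneg _ _) (by positivity))

lemma gamma_smul_right [Fintype V] (p : V → V → ℝ) (f h : V → ℂ) (c : ℂ) (x : V) :
    gamma p f (fun v => c * h v) x = conj c * gamma p f h x := by
  unfold gamma
  have h1 : (fun v => f v * conj (c * h v)) = fun v => conj c * (f v * conj (h v)) :=
    funext fun v => by rw [map_mul]; ring
  rw [h1, lap_const_mul, lap_const_mul]
  simp only [map_mul]
  ring

lemma gamma_smul_left [Fintype V] (p : V → V → ℝ) (f h : V → ℂ) (c : ℂ) (x : V) :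
    gamma p (fun v => c * f v) h x = c * gamma p f h x := by
  unfold gamma
  have h1 : (fun v => (c * f v) * conj (h v)) = fun v => c * (f v * conj (h v)) :=
    funext fun v => by ring
  rw [h1, lap_const_mul, lap_const_mul]
  ring

/-- Harnack inequality, Theorem 2.4.  For a harmonic
eigenfunction `f` of `−Δ` with eigenvalue `λ > 0` satisfying `CD(n,κ)`:
`|∇f|²(x) ≤ ((8 − 2/n)λ − 4κ)·max_z |f(z)|²`. -/
theorem harnack {V : Type*} [Fintype V] [Nonempty V]
    (p : V → V → ℝ) (hG : IsWeightedGraph p) (hconn : Connected p)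
    (n κ : ℝ) (hn : 1 < n) (f : V → ℂ) (lam : ℝ) (hlam : 0 < lam)
    (hf0 : f ≠ 0) (heig : ∀ x, -lap p f x = (lam : ℂ) * f x)
    (hcd : SatCD p n κ f) (x : V) :
    energy p f x ≤ ((8 - 2 / n) * lam - 4 * κ) * ⨆ z : V, ‖f z‖ ^ 2 := by
  classical
  set u : V → ℝ := fun v => ‖f v‖ ^ 2 with hu
  set g : V → ℝ := fun v => energy p f v / 2 with hgdef
  have hupos : ∀ v, 0 ≤ u v := fun v => by positivity
  have hgnn : ∀ v, 0 ≤ g v := fun v => by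
    have := energy_nonneg p hG f v; simp only [hgdef]; linarith
  have hlf : ∀ v, lap p f v = -((lam : ℂ) * f v) := fun v => by
    linear_combination -(heig v)
  have hlffun : lap p f = fun v => (-(lam : ℂ)) * f v :=
    funext fun v => by rw [hlf v]; ring
  have hgam : ∀ v, gamma p f f v = ((g v : ℝ) : ℂ) := fun v => gamma_self p f v
  have hgamfun : gamma p f f = fun v => ((g v : ℝ) : ℂ) := funext hgam
  have hgre : ∀ v, (gamma p f f v).re = g v := fun v => by rw [hgam v]; simp
  -- Δu = 2g - 2λu
  have hlapu : ∀ v, lapR p u v = 2 * g v - 2 * lam * u v := by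
    intro v
    have hffconj : (fun w => f w * conj (f w)) = fun w => ((u w : ℝ) : ℂ) :=
      funext fun w => by
        rw [show ((u w : ℝ) : ℂ) = ((‖f w‖ : ℝ) : ℂ) ^ 2 by push_cast [hu]; ring,
          norm_sq_cast]
    have h2 : conj (lap p f v) = -((lam : ℂ) * conj (f v)) := by
      rw [hlf v]; simp [map_mul, Complex.conj_ofReal]
    have h3 := gamma_self p f v
    unfold gamma at h3
    have h4 : f v * conj (f v) = ((u v : ℝ) : ℂ) := congrFun hffconj v
    have h5 : ((lapR p u v : ℝ) : ℂ) = ((2 * g v - 2 * lam * u v : ℝ) : ℂ) := by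
      rw [← lap_ofReal, ← hffconj]
      push_cast
      linear_combination 2 * h3 + f v * h2 + conj (f v) * hlf v - (2:ℂ) * (lam:ℂ) * h4
    exact_mod_cast h5
  -- Γ₂ real part
  have hg2 : ∀ v, (gamma2 p f f v).re = lapR p g v / 2 + lam * g v := by
    intro v
    unfold gamma2
    rw [hgamfun, lap_ofReal, hlffun, gamma_smul_right, gamma_smul_left, hgam v]
    simp [Complex.conj_ofReal]
    ring
  -- CD consequence
  have hnormlap : ∀ v, ‖lap p f v‖ ^ 2 = lam ^ 2 * u v := by
    intro v
    rw [hlf v]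
    rw [norm_neg, norm_mul, Complex.norm_real, Real.norm_eq_abs, abs_of_pos hlam, mul_pow]
  have hlapg : ∀ v, 2 * n⁻¹ * lam ^ 2 * u v + 2 * (κ - lam) * g v ≤ lapR p g v := by
    intro v
    have h := hcd v
    rw [hnormlap v, hgre v, hg2 v, one_div] at h
    linarith [h]
  -- sup facts
  set M : ℝ := ⨆ z : V, ‖f z‖ ^ 2 with hM
  have hMle : ∀ z, u z ≤ M := fun z =>
    le_ciSup (Set.Finite.bddAbove (Set.finite_range _)) z
  have hM0 : 0 ≤ M := le_trans (hupos (Classical.arbitrary V)) (hMle _)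
  -- κ ≤ lam
  have hκlam : κ ≤ lam := by
    obtain ⟨x₁, -, hx₁⟩ := Finset.exists_max_image Finset.univ g ⟨Classical.arbitrary V,
      Finset.mem_univ _⟩
    have hmax : ∀ y, g y ≤ g x₁ := fun y => hx₁ y (Finset.mem_univ y)
    have h1 := lapR_nonpos p hG g x₁ hmax
    have h2 := hlapg x₁
    have hg₁pos : 0 < g x₁ := by
      rcases (hgnn x₁).lt_or_eq with h | h
      · exact h
      · exfalso
        apply hf0
        funext v
        have hgv : g v = 0 := le_antisymm (h ▸ hmax v) (hgnn v)
        have hen : energy p f v = 0 := by simp only [hgdef] at hgv; linarith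
        have hsum : (∑ y, p v y * ‖f y - f v‖ ^ 2) = 0 := by
          unfold energy at hen
          have hd := hG.deg_pos v
          have hdinv : (deg p v)⁻¹ ≠ 0 := by positivity
          exact (mul_eq_zero.1 hen).resolve_left hdinv
        have hterm : ∀ y ∈ Finset.univ, p v y * ‖f y - f v‖ ^ 2 = 0 :=
          (Finset.sum_eq_zero_iff_of_nonneg fun y _ =>
            mul_nonneg (hG.nonneg _ _) (by positivity)).1 hsum
        have hlap0 : lap p f v = 0 := by
          unfold lap
          rw [Finset.sum_eq_zero, mul_zero]
          intro y _
          rcases mul_eq_zero.1 (hterm y (Finset.mem_univ y)) with h0 | h0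
          · rw [h0]; push_cast; ring
          · have : f y - f v = 0 := by
              have : ‖f y - f v‖ = 0 := by nlinarith [norm_nonneg (f y - f v)]
              exact norm_eq_zero.1 this
            rw [this, mul_zero]
        have := heig v
        rw [hlap0] at this
        have hl0 : ((lam : ℝ) : ℂ) ≠ 0 := by
          exact_mod_cast Complex.ofReal_ne_zero.2 hlam.ne'
        simpa [hl0] using this.symm
    by_contra hc
    push_neg at hc
    have hninv : (0:ℝ) ≤ n⁻¹ := inv_nonneg.2 (by linarith)
    have t1 : 0 ≤ 2 * n⁻¹ * lam ^ 2 * u x₁ :=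
      mul_nonneg (mul_nonneg (mul_nonneg (by norm_num) hninv) (sq_nonneg lam)) (hupos x₁)
    have t2 : 0 < (κ - lam) * g x₁ := mul_pos (sub_pos.2 hc) hg₁pos
    linarith [t1, t2, h1, h2]
  -- main max-principle argument
  set F : V → ℝ := fun v => 2 * g v + (4 * lam - 2 * κ) * u v with hF
  obtain ⟨x₀, -, hx₀⟩ := Finset.exists_max_image Finset.univ F ⟨Classical.arbitrary V,
    Finset.mem_univ _⟩
  have hmaxF : ∀ y, F y ≤ F x₀ := fun y => hx₀ y (Finset.mem_univ y)
  have h1 : lapR p F x₀ ≤ 0 := lapR_nonpos p hG F x₀ hmaxF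
  have h2 : lapR p F x₀ = 2 * lapR p g x₀ + (4 * lam - 2 * κ) * lapR p u x₀ :=
    lapR_linear p g u 2 (4 * lam - 2 * κ) x₀
  have h3 : 2 * lapR p g x₀ + (4 * lam - 2 * κ) * (2 * g x₀ - 2 * lam * u x₀) ≤ 0 := by
    rw [← hlapu x₀, ← h2]; exact h1
  have key : 4 * lam * g x₀ ≤ lam * u x₀ * ((8 - 4 * n⁻¹) * lam - 4 * κ) := by
    have h4 := hlapg x₀
    linarith [h3, h4]
  have hco : 0 ≤ (8 - 4 * n⁻¹) * lam - 4 * κ := by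
    have hn0 : (0:ℝ) < n := by linarith
    have hninv1 : n⁻¹ ≤ 1 := by
      have := (div_le_one hn0).2 (by linarith : 1 ≤ n)
      rwa [one_div] at this
    nlinarith [mul_nonneg hlam.le (by linarith : (0:ℝ) ≤ 1 - n⁻¹), hκlam]
  have key2 : 4 * g x₀ ≤ M * ((8 - 4 * n⁻¹) * lam - 4 * κ) := by
    have hstep : lam * u x₀ * ((8 - 4 * n⁻¹) * lam - 4 * κ)
        ≤ lam * M * ((8 - 4 * n⁻¹) * lam - 4 * κ) := by
      have := mul_nonneg (mul_nonneg hlam.le (sub_nonneg.2 (hMle x₀))) hco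
      nlinarith
    have : lam * (4 * g x₀) ≤ lam * (M * ((8 - 4 * n⁻¹) * lam - 4 * κ)) := by
      nlinarith [key, hstep]
    exact le_of_mul_le_mul_left this hlam
  have hfinal : 2 * g x + (4 * lam - 2 * κ) * u x
      ≤ 2 * g x₀ + (4 * lam - 2 * κ) * u x₀ := hmaxF x
  have henergy : energy p f x = 2 * g x := by simp only [hgdef]; ring
  have hdiv : (8 - 2 / n : ℝ) = 8 - 2 * n⁻¹ := by rw [div_eq_mul_inv]
  rw [henergy, hdiv]
  have hco2 : 0 ≤ 4 * lam - 2 * κ := by linarith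
  linarith [hfinal, key2, hMle x₀, hupos x, hM0,
    mul_nonneg hco2 (sub_nonneg.2 (hMle x₀)), mul_nonneg hco2 (hupos x)]


end Mag
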